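/- Let (A, Ṡ, ω̇, Ċ) be a modular datum, let I be a finite index set, and let X : A × A → ℝ and B : I × A → ℝ be functions with X(μ, λ) ≥ 0 and B(i, λ) ≥ 0 for all arguments. Let E be a finite index set with maps m : E → A, l : E → A and weights p : E → ℝ with p(e) ≥ 0 and Σ_{e∈E} p(e) = 1, and assume: (a) X(μ, λ) = Σ_{e∈E} (Ṡ_{μ̄, m(e)}/Ṡ_{1, m(e)}) · (Ṡ_{λ, l(e)}/Ṡ_{1, l(e)}) · p(e) for all μ, λ ∈ A (where μ̄ denotes the involution applied to μ); (b) X(μ, λ) ≠ 0 implies ω̇_μ = ω̇_λ; (c) X(μ, λ) ≥ Σ_{i∈I} B(i, μ) · B(i, λ) for all μ, λ ∈ A; (d) Σ_{i∈I} Σ_{μ∈A} Σ_{λ∈A} Ṡ_{1μ} · B(i, μ) · B(i, λ) · Ṡ_{1λ} = 1. Then X(μ, λ) = Σ_{i∈I} B(i, μ) · B(i, λ) for all μ, λ ∈ A. -/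

import Mathlib

open scoped BigOperators

/-- A modular datum `(I, S, ω, C)`: the genus-zero modular matrices data of §2.1. -/
structure ModularDatum (I : Type*) [Fintype I] [DecidableEq I] : Type _ where
  one : I
  bar : I → I
  bar_invol : Function.Involutive bar
  bar_one : bar one = one
  S : Matrix I I ℂ
  S_symm : ∀ i j, S i j = S j i
  S_unitary : S ∈ Matrix.unitaryGroup I ℂ
  S_one_im : ∀ i, (S one i).im = 0
  S_one_pos : ∀ i, 0 < (S one i).re
  ω : I → ℂ
  ω_abs : ∀ i, ‖ω i‖ = 1
  ω_one : ω one = 1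
  ω_bar : ∀ i, ω (bar i) = ω i
  C : ℂ
  C_abs : ‖C‖ = 1
  rel_STS : (S * Matrix.diagonal (fun i => C * ω i)) ^ 3 = S ^ 2
  rel_Ssq : ∀ i j, (S ^ 2) i j = if j = bar i then 1 else 0

namespace ModularDatum

variable {A : Type*} [Fintype A] [DecidableEq A] (H : ModularDatum A)

/-- The diagonal `T`-matrix entries. -/
noncomputable def t (μ : A) : ℂ := H.C * H.ω μ

/-- The `T`-matrix. -/
noncomputable def T : Matrix A A ℂ := Matrix.diagonal H.t

/-- The inverse `T`-matrix. -/
noncomputable def T' : Matrix A A ℂ := Matrix.diagonal (fun μ => (starRingEnd ℂ) (H.t μ))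

/-- The charge-conjugation matrix. -/
noncomputable def J : Matrix A A ℂ := Matrix.of fun i j => if i = H.bar j then 1 else 0

lemma t_bar (μ : A) : H.t (H.bar μ) = H.t μ := by simp [t, H.ω_bar]

lemma t_one : H.t H.one = H.C := by simp [t, H.ω_one]

lemma t_abs (μ : A) : ‖H.t μ‖ = 1 := by
  simp [t, map_mul, H.C_abs, H.ω_abs]

lemma t_mul_conj (μ : A) : H.t μ * (starRingEnd ℂ) (H.t μ) = 1 := by
  rw [Complex.mul_conj, Complex.normSq_eq_norm_sq, t_abs]
  norm_num

lemma conj_mul_t (μ : A) : (starRingEnd ℂ) (H.t μ) * H.t μ = 1 := by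
  rw [mul_comm]; exact H.t_mul_conj μ

lemma C_mul_conj : H.C * (starRingEnd ℂ) H.C = 1 := by
  rw [Complex.mul_conj, Complex.normSq_eq_norm_sq, H.C_abs]; norm_num

lemma conj_mul_C : (starRingEnd ℂ) H.C * H.C = 1 := by
  rw [mul_comm]; exact H.C_mul_conj

lemma ω_mul_conj (μ : A) : H.ω μ * (starRingEnd ℂ) (H.ω μ) = 1 := by
  rw [Complex.mul_conj, Complex.normSq_eq_norm_sq, H.ω_abs]; norm_num

lemma T_mul_T' : H.T * H.T' = 1 := by
  rw [T, T', Matrix.diagonal_mul_diagonal]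
  have : ∀ i, H.t i * (starRingEnd ℂ) (H.t i) = 1 := H.t_mul_conj
  simp only [this]
  exact Matrix.diagonal_one

lemma T'_mul_T : H.T' * H.T = 1 := by
  rw [T, T', Matrix.diagonal_mul_diagonal]
  have : ∀ i, (starRingEnd ℂ) (H.t i) * H.t i = 1 := H.conj_mul_t
  simp only [this]
  exact Matrix.diagonal_one

lemma bar_eq_comm {i j : A} : j = H.bar i ↔ i = H.bar j := by
  constructor
  · rintro rfl; rw [H.bar_invol]
  · rintro rfl; rw [H.bar_invol]

lemma Ssq : H.S * H.S = H.J := by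
  ext i j
  rw [show H.S * H.S = H.S ^ 2 from (sq H.S).symm, H.rel_Ssq i j]
  simp only [J, Matrix.of_apply]
  by_cases h : j = H.bar i
  · rw [if_pos h, if_pos (H.bar_eq_comm.mp h)]
  · rw [if_neg h, if_neg fun hc => h (H.bar_eq_comm.mpr hc)]

lemma J_mul_J : H.J * H.J = 1 := by
  ext i j
  rw [Matrix.mul_apply, Finset.sum_eq_single (H.bar j)]
  · simp [J, H.bar_invol j, Matrix.one_apply]
  · intro b _ hb
    simp only [J, Matrix.of_apply]
    rw [if_neg hb, mul_zero]
  · intro h; exact absurd (Finset.mem_univ _) h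

lemma S_mul_J : H.S * H.J = H.J * H.S := by
  rw [← H.Ssq, ← mul_assoc, mul_assoc]

lemma S_quad : H.S * (H.S * (H.S * H.S)) = 1 := by
  rw [H.Ssq, show H.S * (H.S * H.J) = H.S * H.S * H.J from (mul_assoc _ _ _).symm,
    H.Ssq, H.J_mul_J]

lemma conjS_mul_S : H.S.map (starRingEnd ℂ) * H.S = 1 := by
  have h := Matrix.UnitaryGroup.star_mul_self (⟨H.S, H.S_unitary⟩ : Matrix.unitaryGroup A ℂ)
  have hs : star H.S = H.S.map (starRingEnd ℂ) := by
    ext i j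
    simp only [Matrix.star_apply, Matrix.map_apply, Complex.star_def]
    rw [H.S_symm i j]
  rwa [hs] at h

lemma conjS_eq : H.S.map (starRingEnd ℂ) = H.J * H.S := by
  calc H.S.map (starRingEnd ℂ)
      = H.S.map (starRingEnd ℂ) * (H.S * (H.S * (H.S * H.S))) := by rw [H.S_quad, mul_one]
    _ = H.S.map (starRingEnd ℂ) * H.S * (H.S * (H.S * H.S)) := (mul_assoc _ _ _).symm
    _ = H.S * (H.S * H.S) := by rw [H.conjS_mul_S, one_mul]
    _ = H.S * H.S * H.S := (mul_assoc _ _ _).symm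
    _ = H.J * H.S := by rw [H.Ssq]

lemma conj_S_apply (μ ν : A) : (starRingEnd ℂ) (H.S μ ν) = H.S (H.bar μ) ν := by
  have h : (H.S.map (starRingEnd ℂ)) μ ν = (H.J * H.S) μ ν := by rw [H.conjS_eq]
  rw [Matrix.map_apply] at h
  rw [h, Matrix.mul_apply, Finset.sum_eq_single (H.bar μ)]
  · simp only [J, Matrix.of_apply, if_pos (H.bar_invol μ).symm, one_mul]
  · intro b _ hb
    simp only [J, Matrix.of_apply]
    rw [if_neg fun hc => hb (H.bar_eq_comm.mp hc), zero_mul]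
  · intro h; exact absurd (Finset.mem_univ _) h

lemma S_one_real (μ : A) : H.S H.one μ = (((H.S H.one μ).re : ℝ) : ℂ) := by
  rw [Complex.ext_iff]
  simp [H.S_one_im μ]

lemma conj_S_one (μ : A) : (starRingEnd ℂ) (H.S H.one μ) = H.S H.one μ :=
  Complex.conj_eq_iff_im.mpr (H.S_one_im μ)

lemma S_one_bar (μ : A) : H.S H.one (H.bar μ) = H.S H.one μ := by
  calc H.S H.one (H.bar μ) = H.S (H.bar μ) H.one := H.S_symm _ _
    _ = (starRingEnd ℂ) (H.S μ H.one) := (H.conj_S_apply _ _).symm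
    _ = (starRingEnd ℂ) (H.S H.one μ) := by rw [H.S_symm]
    _ = H.S H.one μ := H.conj_S_one μ

lemma S_one_ne (μ : A) : H.S H.one μ ≠ 0 := by
  intro h
  have := H.S_one_pos μ
  rw [h] at this
  simp at this

end ModularDatum

namespace ModularDatum

variable {A : Type*} [Fintype A] [DecidableEq A] (H : ModularDatum A)

lemma J_comm_diag (d : A → ℂ) (hd : ∀ μ, d (H.bar μ) = d μ) :
    H.J * Matrix.diagonal d = Matrix.diagonal d * H.J := by
  ext i j
  rw [Matrix.mul_diagonal, Matrix.diagonal_mul]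
  simp only [J, Matrix.of_apply]
  by_cases h : i = H.bar j
  · rw [if_pos h, h, hd j, mul_comm]
  · rw [if_neg h, mul_zero, zero_mul]

lemma J_mul_T : H.J * H.T = H.T * H.J := H.J_comm_diag H.t H.t_bar

lemma J_mul_T' : H.J * H.T' = H.T' * H.J :=
  H.J_comm_diag _ (fun μ => by rw [H.t_bar])

lemma isUnit_S : IsUnit H.S :=
  ⟨⟨H.S, H.S * (H.S * H.S), H.S_quad, mul_eq_one_comm.mp H.S_quad⟩, rfl⟩

/-- The relation `STS = T⁻¹ S T⁻¹`. -/
lemma STS : H.S * (H.T * H.S) = H.T' * (H.S * H.T') := by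
  have h3 : H.S * (H.T * (H.S * (H.T * (H.S * H.T)))) = H.S * H.S := by
    have h := H.rel_STS
    rw [pow_succ, pow_succ, pow_one, sq] at h
    have h' : H.S * H.T * (H.S * H.T) * (H.S * H.T) = H.S * H.S := h
    simpa only [mul_assoc] using h'
  have h5 : H.T * (H.S * (H.T * (H.S * H.T))) = H.S := H.isUnit_S.mul_left_cancel h3
  have h6 : H.S * (H.T * (H.S * H.T)) = H.T' * H.S := by
    have h := congrArg (fun M => H.T' * M) h5
    rwa [← mul_assoc, H.T'_mul_T, one_mul] at h
  have h7 := congrArg (fun M => M * H.T') h6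
  simp only [mul_assoc] at h7
  rwa [H.T_mul_T', mul_one] at h7

end ModularDatum

namespace ModularDatum

variable {A : Type*} [Fintype A] [DecidableEq A] (H : ModularDatum A)

lemma T_map : H.T.map (starRingEnd ℂ) = H.T' := by
  rw [T, T', Matrix.diagonal_map (map_zero _)]

lemma T'_map : H.T'.map (starRingEnd ℂ) = H.T := by
  rw [T, T', Matrix.diagonal_map (map_zero _)]
  simp only [starRingEnd_self_apply]

/-- The conjugate relation `S T⁻¹ S = J T S T`. -/
lemma STinvS : H.S * H.T' * H.S = H.J * (H.T * H.S * H.T) := by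
  have hc1 := congrArg (fun M : Matrix A A ℂ => M.map (starRingEnd ℂ)) H.STS
  simp only [Matrix.map_mul] at hc1
  rw [H.conjS_eq, H.T_map, H.T'_map] at hc1
  simp only [← mul_assoc] at hc1
  -- hc1 : J * S * T' * J * S = T * J * S * T
  rw [mul_assoc (H.J * H.S) H.T' H.J, ← H.J_mul_T'] at hc1
  rw [← mul_assoc (H.J * H.S) H.J H.T'] at hc1
  rw [mul_assoc H.J H.S H.J, H.S_mul_J, ← mul_assoc H.J H.J H.S, H.J_mul_J, one_mul] at hc1
  rw [← H.J_mul_T] at hc1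
  rw [mul_assoc H.J H.T H.S, mul_assoc H.J (H.T * H.S) H.T] at hc1
  exact hc1

lemma sumP (ν : A) : ∑ μ, H.S H.one μ * (H.t μ * H.S μ ν)
    = (starRingEnd ℂ) H.C * (H.S H.one ν * (starRingEnd ℂ) (H.t ν)) := by
  have h : (H.S * (H.T * H.S)) H.one ν = (H.T' * (H.S * H.T')) H.one ν := by rw [H.STS]
  rw [Matrix.mul_apply] at h
  simp only [T, T', Matrix.diagonal_mul, Matrix.mul_diagonal] at h
  rw [h, H.t_one]

lemma sumQ (ν : A) : ∑ μ, H.S H.one μ * (starRingEnd ℂ) (H.t μ) * H.S μ ν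
    = H.C * H.S H.one ν * H.t ν := by
  have h : (H.S * H.T' * H.S) H.one ν = (H.J * (H.T * H.S * H.T)) H.one ν := by rw [H.STinvS]
  have hR : (H.J * (H.T * H.S * H.T)) H.one ν = H.C * H.S H.one ν * H.t ν := by
    rw [Matrix.mul_apply, Finset.sum_eq_single H.one]
    · have hcond : H.one = H.bar H.one := H.bar_one.symm
      simp only [J, Matrix.of_apply, if_pos hcond, one_mul]
      rw [T, Matrix.mul_diagonal, Matrix.diagonal_mul, H.t_one]
    · intro b _ hb
      simp only [J, Matrix.of_apply]
      rw [if_neg fun hc => hb (by rw [H.bar_eq_comm.mp hc, H.bar_one]), zero_mul]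
    · intro hmem; exact absurd (Finset.mem_univ _) hmem
  rw [hR] at h
  rw [← h, Matrix.mul_apply]
  refine Finset.sum_congr rfl fun μ _ => ?_
  rw [T', Matrix.mul_diagonal]

lemma sum_bar (f : A → ℂ) : ∑ μ, f (H.bar μ) = ∑ μ, f μ := by
  have := Equiv.sum_comp (Function.Involutive.toPerm H.bar H.bar_invol) f
  simpa [Function.Involutive.coe_toPerm] using this

end ModularDatum

/-- Theorem 3.7 of the paper (Conjecture 7.1 of Böckenhauer–Evans) in
abstract form: under the spectral decomposition (a), the phase condition (b), the
inequality (c) and the normalization (d), one has `X(μ,λ) = Σ_i B(i,μ)·B(i,λ)`. -/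
theorem conformal_inclusion_branching {A I E : Type*}
    [Fintype A] [DecidableEq A] [Fintype I] [Fintype E]
    (H : ModularDatum A)
    (X : A → A → ℝ) (B : I → A → ℝ)
    (hX : ∀ μ lam, 0 ≤ X μ lam) (hB : ∀ i lam, 0 ≤ B i lam)
    (m l : E → A) (p : E → ℝ)
    (hp : ∀ e, 0 ≤ p e) (hpsum : ∑ e, p e = 1)
    (ha : ∀ μ lam, (X μ lam : ℂ) =
      ∑ e, (H.S (H.bar μ) (m e) / H.S H.one (m e)) *
           (H.S lam (l e) / H.S H.one (l e)) * (p e : ℂ))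
    (hb : ∀ μ lam, X μ lam ≠ 0 → H.ω μ = H.ω lam)
    (hc : ∀ μ lam, ∑ i, B i μ * B i lam ≤ X μ lam)
    (hd : ∑ i, ∑ μ, ∑ lam,
      H.S H.one μ * (B i μ : ℂ) * (B i lam : ℂ) * H.S H.one lam = 1) :
    ∀ μ lam, X μ lam = ∑ i, B i μ * B i lam := by
  classical
  set s : A → ℝ := fun μ => (H.S H.one μ).re with hs_def
  have hsS : ∀ μ, H.S H.one μ = ((s μ : ℝ) : ℂ) := fun μ => H.S_one_real μ
  have hspos : ∀ μ, 0 < s μ := H.S_one_pos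
  -- Step A: insert the phases using hypothesis (b)
  have stepA : ∑ μ, ∑ lam, H.S H.one μ * (X μ lam : ℂ) * H.S H.one lam
      = ∑ μ, ∑ lam, (H.t μ * (starRingEnd ℂ) (H.t lam)) *
          (H.S H.one μ * (X μ lam : ℂ) * H.S H.one lam) := by
    refine Finset.sum_congr rfl fun μ _ => Finset.sum_congr rfl fun lam _ => ?_
    by_cases hx : X μ lam = 0
    · simp [hx]
    · have hω := hb μ lam hx
      have h1 : H.t μ = H.t lam := by unfold ModularDatum.t; rw [hω]
      rw [h1, H.t_mul_conj, one_mul]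
  -- Step B: evaluate the quadratic form using (a) and the modular relations
  have stepB : ∑ μ, ∑ lam, H.S H.one μ * (X μ lam : ℂ) * H.S H.one lam
      = ∑ e, (starRingEnd ℂ) (H.ω (m e)) * H.ω (l e) * (p e : ℂ) := by
    rw [stepA]
    have h1 : ∀ μ lam, (H.t μ * (starRingEnd ℂ) (H.t lam)) *
          (H.S H.one μ * (X μ lam : ℂ) * H.S H.one lam)
        = ∑ e, (H.S H.one μ * (H.t μ * H.S (H.bar μ) (m e))) *
               (H.S H.one lam * ((starRingEnd ℂ) (H.t lam) * H.S lam (l e))) *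
               ((p e : ℂ) / (H.S H.one (m e) * H.S H.one (l e))) := by
      intro μ lam
      rw [ha μ lam]
      simp only [Finset.mul_sum, Finset.sum_mul]
      refine Finset.sum_congr rfl fun e _ => ?_
      ring
    simp only [h1]
    have hswap : ∀ F : A → A → E → ℂ,
        ∑ μ, ∑ lam, ∑ e, F μ lam e = ∑ e, ∑ μ, ∑ lam, F μ lam e := by
      intro F
      calc ∑ μ, ∑ lam, ∑ e, F μ lam e
          = ∑ μ, ∑ e, ∑ lam, F μ lam e :=
            Finset.sum_congr rfl fun μ _ => Finset.sum_comm
        _ = ∑ e, ∑ μ, ∑ lam, F μ lam e := Finset.sum_comm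
    rw [hswap]
    refine Finset.sum_congr rfl fun e _ => ?_
    have hfact : ∀ (a b : A → ℂ) (c : ℂ),
        (∑ μ, ∑ lam, a μ * b lam * c) = (∑ μ, a μ) * (∑ lam, b lam) * c := by
      intro a b c
      rw [Finset.sum_mul_sum]
      simp only [Finset.sum_mul]
    rw [hfact]
    have hA : ∑ μ, H.S H.one μ * (H.t μ * H.S (H.bar μ) (m e))
        = (starRingEnd ℂ) H.C * (H.S H.one (m e) * (starRingEnd ℂ) (H.t (m e))) := by
      rw [← H.sumP (m e), ← H.sum_bar (fun μ => H.S H.one μ * (H.t μ * H.S μ (m e)))]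
      refine Finset.sum_congr rfl fun μ _ => ?_
      rw [H.S_one_bar, H.t_bar]
    have hB2 : ∑ lam, H.S H.one lam * ((starRingEnd ℂ) (H.t lam) * H.S lam (l e))
        = H.C * H.S H.one (l e) * H.t (l e) := by
      rw [← H.sumQ (l e)]
      exact Finset.sum_congr rfl fun lam _ => by ring
    rw [hA, hB2]
    have h2 : (starRingEnd ℂ) (H.t (m e))
        = (starRingEnd ℂ) H.C * (starRingEnd ℂ) (H.ω (m e)) := map_mul _ _ _
    have h3 : H.t (l e) = H.C * H.ω (l e) := rfl
    rw [h2, h3]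
    have hm : H.S H.one (m e) ≠ 0 := H.S_one_ne (m e)
    have hl : H.S H.one (l e) ≠ 0 := H.S_one_ne (l e)
    calc (starRingEnd ℂ) H.C *
          (H.S H.one (m e) * ((starRingEnd ℂ) H.C * (starRingEnd ℂ) (H.ω (m e)))) *
          (H.C * H.S H.one (l e) * (H.C * H.ω (l e))) *
          ((p e : ℂ) / (H.S H.one (m e) * H.S H.one (l e)))
        = ((starRingEnd ℂ) H.C * H.C) * ((starRingEnd ℂ) H.C * H.C) *
          ((starRingEnd ℂ) (H.ω (m e)) * H.ω (l e) * (p e : ℂ)) *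
          (H.S H.one (m e) * H.S H.one (l e) / (H.S H.one (m e) * H.S H.one (l e))) := by
          ring
      _ = (starRingEnd ℂ) (H.ω (m e)) * H.ω (l e) * (p e : ℂ) := by
          rw [H.conj_mul_C, div_self (mul_ne_zero hm hl)]
          simp
  -- hence the quadratic form is at most 1
  have hq_nonneg : (0:ℝ) ≤ ∑ μ, ∑ lam, s μ * X μ lam * s lam :=
    Finset.sum_nonneg fun μ _ => Finset.sum_nonneg fun lam _ =>
      mul_nonneg (mul_nonneg (hspos μ).le (hX μ lam)) (hspos lam).le
  have hQcq : ∑ μ, ∑ lam, H.S H.one μ * (X μ lam : ℂ) * H.S H.one lam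
      = ((∑ μ, ∑ lam, s μ * X μ lam * s lam : ℝ) : ℂ) := by
    push_cast
    refine Finset.sum_congr rfl fun μ _ => Finset.sum_congr rfl fun lam _ => ?_
    rw [hsS μ, hsS lam]
  have hq_le : (∑ μ, ∑ lam, s μ * X μ lam * s lam) ≤ 1 := by
    have habs : ‖∑ μ, ∑ lam, H.S H.one μ * (X μ lam : ℂ) * H.S H.one lam‖ ≤ 1 := by
      rw [stepB]
      calc ‖∑ e, (starRingEnd ℂ) (H.ω (m e)) * H.ω (l e) * (p e : ℂ)‖
          ≤ ∑ e, ‖(starRingEnd ℂ) (H.ω (m e)) * H.ω (l e) * (p e : ℂ)‖ :=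
            norm_sum_le _ _
        _ = ∑ e, p e := Finset.sum_congr rfl fun e _ => by
            simp [map_mul, H.ω_abs, Complex.norm_real, abs_of_nonneg (hp e)]
        _ = 1 := hpsum
    rw [hQcq, Complex.norm_real, Real.norm_eq_abs, abs_of_nonneg hq_nonneg] at habs
    exact habs
  -- the normalization (d) in real form
  have hdr : (∑ μ, ∑ lam, s μ * (∑ i, B i μ * B i lam) * s lam) = 1 := by
    have h1 : ∑ i, ∑ μ, ∑ lam,
          H.S H.one μ * (B i μ : ℂ) * (B i lam : ℂ) * H.S H.one lam
        = ((∑ μ, ∑ lam, s μ * (∑ i, B i μ * B i lam) * s lam : ℝ) : ℂ) := by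
      push_cast
      rw [Finset.sum_comm]
      refine Finset.sum_congr rfl fun μ _ => ?_
      rw [Finset.sum_comm]
      refine Finset.sum_congr rfl fun lam _ => ?_
      rw [Finset.mul_sum, Finset.sum_mul]
      refine Finset.sum_congr rfl fun i _ => ?_
      rw [hsS μ, hsS lam]
      push_cast
      ring
    have h2 : ((∑ μ, ∑ lam, s μ * (∑ i, B i μ * B i lam) * s lam : ℝ) : ℂ) = 1 :=
      h1.symm.trans hd
    exact_mod_cast h2
  -- the deficit sum vanishes
  have hterm_nonneg : ∀ μ lam, (0:ℝ) ≤ s μ * (X μ lam - ∑ i, B i μ * B i lam) * s lam :=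
    fun μ lam => mul_nonneg (mul_nonneg (hspos μ).le (sub_nonneg.mpr (hc μ lam))) (hspos lam).le
  have hkey : ∑ μ, ∑ lam, s μ * (X μ lam - ∑ i, B i μ * B i lam) * s lam = 0 := by
    have hexp : ∑ μ, ∑ lam, s μ * (X μ lam - ∑ i, B i μ * B i lam) * s lam
        = (∑ μ, ∑ lam, s μ * X μ lam * s lam)
          - (∑ μ, ∑ lam, s μ * (∑ i, B i μ * B i lam) * s lam) := by
      rw [← Finset.sum_sub_distrib]
      refine Finset.sum_congr rfl fun μ _ => ?_
      rw [← Finset.sum_sub_distrib]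
      refine Finset.sum_congr rfl fun lam _ => ?_
      ring
    have hle : ∑ μ, ∑ lam, s μ * (X μ lam - ∑ i, B i μ * B i lam) * s lam ≤ 0 := by
      rw [hexp, hdr]; linarith
    have hge : (0:ℝ) ≤ ∑ μ, ∑ lam, s μ * (X μ lam - ∑ i, B i μ * B i lam) * s lam :=
      Finset.sum_nonneg fun μ _ => Finset.sum_nonneg fun lam _ => hterm_nonneg μ lam
    linarith
  -- conclude pointwise
  intro μ lam
  have houter := (Finset.sum_eq_zero_iff_of_nonneg
    (fun μ' _ => Finset.sum_nonneg fun lam' _ => hterm_nonneg μ' lam')).mp hkey μ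
    (Finset.mem_univ μ)
  have hinner := (Finset.sum_eq_zero_iff_of_nonneg
    (fun lam' _ => hterm_nonneg μ lam')).mp houter lam (Finset.mem_univ lam)
  have hD : X μ lam - ∑ i, B i μ * B i lam = 0 := by
    rcases mul_eq_zero.mp hinner with h | h
    · rcases mul_eq_zero.mp h with h' | h'
      · exact absurd h' (ne_of_gt (hspos μ))
      · exact h'
    · exact absurd h (ne_of_gt (hspos lam))
  linarith
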